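/- Let (X,d) be a geodesic space, λ ≥ 1, and M ≥ 0 such that every λ-quasi-geodesic triangle in X is M-slim. Let γ:[0,∞)→X be a k-local λ-quasi-geodesic ray with k > 8λM, and let a, b ∈ [0,∞) with b − a > k. Then the image of the restriction of γ to [a,b] is contained in the closed 2M-neighborhood of any geodesic segment joining γ(a) and γ(b). -/

import Mathlib

open Set Filter Metric

section Defs

variable {X : Type*} [MetricSpace X]

/-- A unit-speed geodesic defined on `[a, b]`. -/
def IsGeodesicOn (γ : ℝ → X) (a b : ℝ) : Prop :=
  ∀ s ∈ Set.Icc a b, ∀ t ∈ Set.Icc a b, dist (γ s) (γ t) = |s - t|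

/-- `S` is a geodesic segment joining `x` and `y`. -/
def IsGeodesicSegment (S : Set X) (x y : X) : Prop :=
  ∃ (a b : ℝ) (γ : ℝ → X), a ≤ b ∧ IsGeodesicOn γ a b ∧ γ a = x ∧ γ b = y ∧
    S = γ '' Set.Icc a b

/-- A geodesic space: every two points are joined by a geodesic segment. -/
def GeodesicSpace (X : Type*) [MetricSpace X] : Prop :=
  ∀ x y : X, ∃ S : Set X, IsGeodesicSegment S x y

/-- A uniquely geodesic space. -/
def UniquelyGeodesic (X : Type*) [MetricSpace X] : Prop :=
  ∀ x y : X, ∃! S : Set X, IsGeodesicSegment S x y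

/-- `S` is contained in the closed `M`-neighborhood of `T`. -/
def InClosedNbhd (S T : Set X) (M : ℝ) : Prop :=
  ∀ p ∈ S, ∃ q ∈ T, dist p q ≤ M

/-- A triangle with sides `S1, S2, S3` is `M`-slim. -/
def SlimTriangle (S1 S2 S3 : Set X) (M : ℝ) : Prop :=
  InClosedNbhd S1 (S2 ∪ S3) M ∧ InClosedNbhd S2 (S1 ∪ S3) M ∧ InClosedNbhd S3 (S1 ∪ S2) M

/-- `X` is `δ`-hyperbolic: every geodesic triangle is `δ`-slim. -/
def DeltaHyperbolic (X : Type*) [MetricSpace X] (δ : ℝ) : Prop :=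
  ∀ x y z : X, ∀ S1 S2 S3 : Set X,
    IsGeodesicSegment S1 x y → IsGeodesicSegment S2 y z → IsGeodesicSegment S3 z x →
    SlimTriangle S1 S2 S3 δ

/-- A geodesic ray `γ : [0, ∞) → X`. -/
def IsGeodesicRay (γ : ℝ → X) : Prop :=
  ∀ s ∈ Set.Ici (0:ℝ), ∀ t ∈ Set.Ici (0:ℝ), dist (γ s) (γ t) = |s - t|

/-- A set is geodesically bounded if it contains no geodesic ray. -/
def GeodesicallyBounded (A : Set X) : Prop :=
  ¬ ∃ γ : ℝ → X, IsGeodesicRay γ ∧ ∀ t ∈ Set.Ici (0:ℝ), γ t ∈ A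

/-- A directional curve `γ : [0, ∞) → X` (with some constant `b ≥ 0`). -/
def IsDirectionalCurve (γ : ℝ → X) : Prop :=
  ∃ b : ℝ, 0 ≤ b ∧ ∀ s ∈ Set.Ici (0:ℝ), ∀ t ∈ Set.Ici (0:ℝ),
    |s - t| - b ≤ dist (γ s) (γ t) ∧ dist (γ s) (γ t) ≤ |s - t|

/-- A set is directionally bounded if it contains no directional curve. -/
def DirectionallyBounded (A : Set X) : Prop :=
  ¬ ∃ γ : ℝ → X, IsDirectionalCurve γ ∧ ∀ t ∈ Set.Ici (0:ℝ), γ t ∈ A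

/-- A subset of a geodesic space is convex if every geodesic segment joining two of its
points is contained in it. -/
def GeodesicConvex (A : Set X) : Prop :=
  ∀ x ∈ A, ∀ y ∈ A, ∀ S : Set X, IsGeodesicSegment S x y → S ⊆ A

/-- The comparison point in the Euclidean plane: the point on the segment from `x'` to `y'`
(of length `L`) at distance `t` from `x'`. -/
noncomputable def cmpPt (x' y' : EuclideanSpace ℝ (Fin 2)) (L t : ℝ) :
    EuclideanSpace ℝ (Fin 2) :=
  AffineMap.lineMap x' y' (t / L)

/-- `X` is a CAT(0) space: it is geodesic and for every geodesic triangle and every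
comparison triangle in the Euclidean plane, distances between points on the triangle are
bounded by the distances between the corresponding comparison points. -/
def CAT0Space (X : Type*) [MetricSpace X] : Prop :=
  GeodesicSpace X ∧
  ∀ (x y z : X) (γ1 γ2 γ3 : ℝ → X),
    IsGeodesicOn γ1 0 (dist x y) → γ1 0 = x → γ1 (dist x y) = y →
    IsGeodesicOn γ2 0 (dist y z) → γ2 0 = y → γ2 (dist y z) = z →
    IsGeodesicOn γ3 0 (dist z x) → γ3 0 = z → γ3 (dist z x) = x →
    ∀ x' y' z' : EuclideanSpace ℝ (Fin 2),
      dist x' y' = dist x y → dist y' z' = dist y z → dist z' x' = dist z x →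
      (∀ s ∈ Set.Icc (0:ℝ) (dist x y), ∀ t ∈ Set.Icc (0:ℝ) (dist y z),
        dist (γ1 s) (γ2 t) ≤ dist (cmpPt x' y' (dist x y) s) (cmpPt y' z' (dist y z) t)) ∧
      (∀ s ∈ Set.Icc (0:ℝ) (dist y z), ∀ t ∈ Set.Icc (0:ℝ) (dist z x),
        dist (γ2 s) (γ3 t) ≤ dist (cmpPt y' z' (dist y z) s) (cmpPt z' x' (dist z x) t)) ∧
      (∀ s ∈ Set.Icc (0:ℝ) (dist z x), ∀ t ∈ Set.Icc (0:ℝ) (dist x y),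
        dist (γ3 s) (γ1 t) ≤ dist (cmpPt z' x' (dist z x) s) (cmpPt x' y' (dist x y) t))

/-- Busemann convexity. -/
def BusemannConvex (X : Type*) [MetricSpace X] : Prop :=
  GeodesicSpace X ∧
  ∀ (a b c d : ℝ) (γ σ : ℝ → X), a ≤ b → c ≤ d →
    IsGeodesicOn γ a b → IsGeodesicOn σ c d →
    ∀ t ∈ Set.Icc (0:ℝ) 1,
      dist (γ ((1-t)*a + t*b)) (σ ((1-t)*c + t*d)) ≤
        (1-t) * dist (γ a) (σ c) + t * dist (γ b) (σ d)

/-- A `(lam, eps)`-quasi-geodesic defined on `[a, b]`. -/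
def IsQuasiGeodesicOn (lam eps : ℝ) (γ : ℝ → X) (a b : ℝ) : Prop :=
  ∀ s ∈ Set.Icc a b, ∀ t ∈ Set.Icc a b,
    (1/lam) * |s - t| - eps ≤ dist (γ s) (γ t) ∧ dist (γ s) (γ t) ≤ lam * |s - t| + eps

/-- A `(lam, eps)`-quasi-geodesic ray. -/
def IsQuasiGeodesicRay (lam eps : ℝ) (γ : ℝ → X) : Prop :=
  ∀ s ∈ Set.Ici (0:ℝ), ∀ t ∈ Set.Ici (0:ℝ),
    (1/lam) * |s - t| - eps ≤ dist (γ s) (γ t) ∧ dist (γ s) (γ t) ≤ lam * |s - t| + eps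

/-- A `k`-local `lam`-quasi-geodesic ray: a `(lam, eps)`-quasi-geodesic ray locally,
for every `eps > 0`. -/
def IsLocalQuasiGeodesicRay (k lam : ℝ) (γ : ℝ → X) : Prop :=
  ∀ eps > (0:ℝ), ∀ s ∈ Set.Ici (0:ℝ), ∀ t ∈ Set.Ici (0:ℝ), |s - t| ≤ k →
    (1/lam) * |s - t| - eps ≤ dist (γ s) (γ t) ∧ dist (γ s) (γ t) ≤ lam * |s - t| + eps

/-- `S` is the image of a `lam`-quasi-geodesic joining `x` and `y`
(i.e. a `(lam, eps)`-quasi-geodesic for every `eps > 0`). -/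
def IsQuasiGeodesicSegment (lam : ℝ) (S : Set X) (x y : X) : Prop :=
  ∃ (a b : ℝ) (γ : ℝ → X), a ≤ b ∧ (∀ eps > (0:ℝ), IsQuasiGeodesicOn lam eps γ a b) ∧
    γ a = x ∧ γ b = y ∧ S = γ '' Set.Icc a b

/-- Every `lam`-quasi-geodesic triangle in `X` is `M`-slim. -/
def QuasiGeodesicTrianglesSlim (X : Type*) [MetricSpace X] (lam M : ℝ) : Prop :=
  ∀ x y z : X, ∀ S1 S2 S3 : Set X,
    IsQuasiGeodesicSegment lam S1 x y → IsQuasiGeodesicSegment lam S2 y z →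
    IsQuasiGeodesicSegment lam S3 z x → SlimTriangle S1 S2 S3 M

/-- A play of the Lion-Man game in `A` with speed `D`. -/
def IsLionManPlay (A : Set X) (D : ℝ) (L M : ℕ → X) : Prop :=
  (∀ n, L n ∈ A) ∧ (∀ n, M n ∈ A) ∧
  (∀ n, ∃ S : Set X, IsGeodesicSegment S (L n) (M n) ∧ L (n+1) ∈ S) ∧
  (∀ n, dist (L n) (L (n+1)) = min D (dist (L n) (M n))) ∧
  (∀ n, dist (M n) (M (n+1)) ≤ D)

/-- The lion wins a play if `d(L_{n+1}, M_n) → 0`. -/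
def LionWins (L M : ℕ → X) : Prop :=
  Filter.Tendsto (fun n => dist (L (n+1)) (M n)) Filter.atTop (nhds 0)

/-- The lion always wins the Lion-Man game played in `A`. -/
def LionAlwaysWins (A : Set X) : Prop :=
  ∀ D > (0:ℝ), ∀ L M : ℕ → X, IsLionManPlay A D L M → LionWins L M

end Defs

section Aux

variable {X : Type*} [MetricSpace X]

lemma geodesicOn_mono {γ : ℝ → X} {a b u v : ℝ} (h : IsGeodesicOn γ a b)
    (hu : u ∈ Set.Icc a b) (hv : v ∈ Set.Icc a b) : IsGeodesicOn γ u v := by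
  intro s hs t ht
  exact h s ⟨hu.1.trans hs.1, hs.2.trans hv.2⟩ t ⟨hu.1.trans ht.1, ht.2.trans hv.2⟩

lemma IsGeodesicSegment.compact {S : Set X} {x y : X} (h : IsGeodesicSegment S x y) :
    IsCompact S := by
  obtain ⟨a, b, g, hab, hg, -, -, rfl⟩ := h
  refine isCompact_Icc.image_of_continuousOn ?_
  refine LipschitzOnWith.continuousOn (K := 1) ?_
  apply LipschitzOnWith.of_dist_le_mul
  intro s hs t ht
  rw [hg s hs t ht, Real.dist_eq]
  simp

lemma geod_to_quasi {lam : ℝ} (hlam : 1 ≤ lam) {S : Set X} {x y : X}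
    (h : IsGeodesicSegment S x y) : IsQuasiGeodesicSegment lam S x y := by
  obtain ⟨a, b, g, hab, hg, hx, hy, rfl⟩ := h
  refine ⟨a, b, g, hab, ?_, hx, hy, rfl⟩
  intro eps heps s hs t ht
  have hd := hg s hs t ht
  have h0 : (0:ℝ) < lam := lt_of_lt_of_le one_pos hlam
  have habs : 0 ≤ |s - t| := abs_nonneg _
  have hinv : 1/lam ≤ 1 := by rw [div_le_one h0]; exact hlam
  have h1 : (1/lam) * |s - t| ≤ 1 * |s - t| := mul_le_mul_of_nonneg_right hinv habs
  have h2 : 1 * |s - t| ≤ lam * |s - t| := mul_le_mul_of_nonneg_right hlam habs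
  constructor
  · rw [hd]; linarith
  · rw [hd]; linarith

lemma quasi_symm {lam : ℝ} {S : Set X} {x y : X}
    (h : IsQuasiGeodesicSegment lam S x y) : IsQuasiGeodesicSegment lam S y x := by
  obtain ⟨a, b, g, hab, hg, hx, hy, rfl⟩ := h
  refine ⟨a, b, fun s => g (a + b - s), hab, ?_, by simpa using hy, by simpa using hx, ?_⟩
  · intro eps heps s hs t ht
    have hs' : a + b - s ∈ Set.Icc a b := ⟨by linarith [hs.1, hs.2], by linarith [hs.1, hs.2]⟩
    have ht' : a + b - t ∈ Set.Icc a b := ⟨by linarith [ht.1, ht.2], by linarith [ht.1, ht.2]⟩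
    have hgg := hg eps heps (a + b - s) hs' (a + b - t) ht'
    have habs : |(a + b - s) - (a + b - t)| = |s - t| := by
      rw [show (a + b - s) - (a + b - t) = -(s - t) by ring, abs_neg]
    rwa [habs] at hgg
  · have himg : (fun s : ℝ => a + b - s) '' Set.Icc a b = Set.Icc a b := by
      rw [show (fun s : ℝ => a + b - s) = (fun s : ℝ => (a + b) - s) from rfl,
        Set.image_const_sub_Icc]
      congr 1 <;> ring
    rw [show (fun s => g (a + b - s)) = g ∘ (fun s : ℝ => a + b - s) from rfl,
      Set.image_comp, himg]

lemma segment_between {lam : ℝ} (hlam : 1 ≤ lam) {S : Set X} {x y : X}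
    (h : IsGeodesicSegment S x y) {p q : X} (hp : p ∈ S) (hq : q ∈ S) :
    ∃ T : Set X, T ⊆ S ∧ IsQuasiGeodesicSegment lam T p q := by
  obtain ⟨a, b, g, hab, hg, -, -, rfl⟩ := h
  obtain ⟨u, hu, rfl⟩ := hp
  obtain ⟨v, hv, rfl⟩ := hq
  rcases le_total u v with huv | huv
  · exact ⟨g '' Set.Icc u v, Set.image_mono (Set.Icc_subset_Icc hu.1 hv.2),
      geod_to_quasi hlam ⟨u, v, g, huv, geodesicOn_mono hg hu hv, rfl, rfl, rfl⟩⟩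
  · exact ⟨g '' Set.Icc v u, Set.image_mono (Set.Icc_subset_Icc hv.1 hu.2),
      quasi_symm (geod_to_quasi hlam ⟨v, u, g, huv, geodesicOn_mono hg hv hu, rfl, rfl, rfl⟩)⟩

lemma geod_point_add {S : Set X} {x y : X} (h : IsGeodesicSegment S x y) {w : X}
    (hw : w ∈ S) : dist x w + dist w y = dist x y := by
  obtain ⟨a, b, g, hab, hg, rfl, rfl, rfl⟩ := h
  obtain ⟨r, hr, rfl⟩ := hw
  rw [hg a ⟨le_refl a, hab⟩ r hr, hg r hr b ⟨hab, le_refl b⟩,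
    hg a ⟨le_refl a, hab⟩ b ⟨hab, le_refl b⟩,
    abs_of_nonpos (by linarith [hr.1] : a - r ≤ 0),
    abs_of_nonpos (by linarith [hr.2] : r - b ≤ 0),
    abs_of_nonpos (by linarith : a - b ≤ 0)]
  ring

end Aux


/-- In a geodesic space where every `λ`-quasi-geodesic triangle is `M`-slim, if `γ` is a
`k`-local `λ`-quasi-geodesic ray with `k > 8λM` and `a, b ∈ [0, ∞)` with `b - a > k`, then
the image of `γ` restricted to `[a, b]` is contained in the closed `2M`-neighborhood of any
geodesic segment joining `γ(a)` and `γ(b)`. -/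
theorem stmt4 {X : Type*} [MetricSpace X] (hgeo : GeodesicSpace X)
    (lam M k : ℝ) (hlam : 1 ≤ lam) (hM : 0 ≤ M)
    (hslim : QuasiGeodesicTrianglesSlim X lam M)
    (γ : ℝ → X) (hk : k > 8 * lam * M) (hγ : IsLocalQuasiGeodesicRay k lam γ)
    (a b : ℝ) (ha : a ∈ Set.Ici (0:ℝ)) (hb : b ∈ Set.Ici (0:ℝ)) (hab : b - a > k)
    (S : Set X) (hS : IsGeodesicSegment S (γ a) (γ b)) :
    InClosedNbhd (γ '' Set.Icc a b) S (2 * M) := by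
  have hlam0 : (0:ℝ) < lam := lt_of_lt_of_le one_pos hlam
  have hk0 : (0:ℝ) < k := lt_of_le_of_lt (mul_nonneg (by linarith : (0:ℝ) ≤ 8 * lam) hM) hk
  have ha0 : (0:ℝ) ≤ a := ha
  have hb0 : (0:ℝ) ≤ b := hb
  have hab' : a ≤ b := by linarith
  have hγaS : γ a ∈ S := by
    obtain ⟨c, d, g, hcd, hg, h1, h2, rfl⟩ := hS
    exact ⟨c, ⟨le_refl c, hcd⟩, h1⟩
  have hγbS : γ b ∈ S := by
    obtain ⟨c, d, g, hcd, hg, h1, h2, rfl⟩ := hS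
    exact ⟨d, ⟨hcd, le_refl d⟩, h2⟩
  have hScomp : IsCompact S := hS.compact
  have hSne : S.Nonempty := ⟨γ a, hγaS⟩
  -- restriction of γ to a short interval is a quasi-geodesic segment
  have hrestr : ∀ s₁ s₂ : ℝ, 0 ≤ s₁ → s₁ ≤ s₂ → s₂ - s₁ ≤ k →
      IsQuasiGeodesicSegment lam (γ '' Set.Icc s₁ s₂) (γ s₁) (γ s₂) := by
    intro s₁ s₂ h0 h12 hle
    refine ⟨s₁, s₂, γ, h12, ?_, rfl, rfl, rfl⟩
    intro eps heps s hs t ht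
    exact hγ eps heps s (Set.mem_Ici.mpr (le_trans h0 hs.1))
      t (Set.mem_Ici.mpr (le_trans h0 ht.1))
      (by rw [abs_sub_le_iff]; constructor <;> linarith [hs.1, hs.2, ht.1, ht.2])
  -- chaining bound
  have chain : ∀ n : ℕ, ∀ s t : ℝ, 0 ≤ s → s ≤ t → t - s ≤ n * k →
      dist (γ s) (γ t) ≤ n * (lam * k + 1) := by
    intro n
    induction n with
    | zero =>
      intro s t hs hst h
      norm_num at h ⊢
      have hst2 : s = t := le_antisymm hst (by linarith)
      simp [hst2]
    | succ n ih =>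
      intro s t hs hst h
      push_cast at h ⊢
      rcases le_total (t - s) k with hc | hc
      · have h2 := (hγ 1 one_pos s (Set.mem_Ici.mpr hs) t (Set.mem_Ici.mpr (hs.trans hst))
          (by rw [abs_sub_comm, abs_of_nonneg (by linarith)]; exact hc)).2
        have habs : |s - t| = t - s := by rw [abs_sub_comm, abs_of_nonneg (by linarith)]
        rw [habs] at h2
        have hpos : 0 ≤ (n : ℝ) * (lam * k + 1) := by positivity
        nlinarith [hlam0.le]
      · have h0u : (0:ℝ) ≤ t - k := by linarith
        have d1 := ih s (t - k) hs (by linarith) (by linarith)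
        have d2 := (hγ 1 one_pos (t - k) (Set.mem_Ici.mpr h0u) t
          (Set.mem_Ici.mpr (hs.trans hst))
          (by rw [show t - k - t = -k by ring, abs_neg, abs_of_nonneg hk0.le])).2
        rw [show t - k - t = -k by ring, abs_neg, abs_of_nonneg hk0.le] at d2
        have htri := dist_triangle (γ s) (γ (t - k)) (γ t)
        linarith
  set D := sSup ((fun t => infDist (γ t) S) '' Set.Icc a b) with hD
  have hbdd : BddAbove ((fun t => infDist (γ t) S) '' Set.Icc a b) := by
    refine ⟨(⌈(b - a)/k⌉₊ : ℝ) * (lam * k + 1), ?_⟩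
    rintro v ⟨t, ht, rfl⟩
    have h1 : infDist (γ t) S ≤ dist (γ t) (γ a) := infDist_le_dist_of_mem hγaS
    have hceil : b - a ≤ (⌈(b - a)/k⌉₊ : ℝ) * k := by
      rw [← div_le_iff₀ hk0]
      exact Nat.le_ceil _
    have h2 : dist (γ a) (γ t) ≤ (⌈(b - a)/k⌉₊ : ℝ) * (lam * k + 1) :=
      chain _ a t ha0 ht.1 (by linarith [ht.2])
    rw [dist_comm] at h2
    exact h1.trans h2
  have hDle : ∀ t ∈ Set.Icc a b, infDist (γ t) S ≤ D := fun t ht => le_csSup hbdd ⟨t, ht, rfl⟩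
  set ε₀ := ((1/lam) * (k/2) - 4*M)/2 with hε₀def
  have h48 : 4*M < (1/lam) * (k/2) := by
    rw [one_div, inv_mul_eq_div, lt_div_iff₀ hlam0]
    nlinarith
  have hε₀ : 0 < ε₀ := by rw [hε₀def]; linarith
  have hval : (1/lam) * (k/2) = 4*M + 2*ε₀ := by rw [hε₀def]; ring
  have key : ∀ t ∈ Set.Icc a b, infDist (γ t) S ≤ max (2*M) (D - ε₀) := by
    intro t ht
    have ht0 : (0:ℝ) ≤ t := le_trans ha0 ht.1
    set s₁ := max a (t - k/2) with hs₁def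
    set s₂ := min b (t + k/2) with hs₂def
    have hs₁a : a ≤ s₁ := le_max_left _ _
    have hs₁t : s₁ ≤ t := max_le ht.1 (by linarith)
    have hts₂ : t ≤ s₂ := le_min ht.2 (by linarith)
    have hs₂b : s₂ ≤ b := min_le_left _ _
    have hs₁0 : (0:ℝ) ≤ s₁ := le_trans ha0 hs₁a
    have hs₂0 : (0:ℝ) ≤ s₂ := le_trans hs₁0 (hs₁t.trans hts₂)
    have hlen : s₂ - s₁ ≤ k := by
      have h1 : t - k/2 ≤ s₁ := le_max_right _ _
      have h2 : s₂ ≤ t + k/2 := min_le_right _ _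
      linarith
    have hs₁b : s₁ ≤ b := hs₁t.trans (hts₂.trans hs₂b)
    have hs₂a : a ≤ s₂ := hs₁a.trans (hs₁t.trans hts₂)
    obtain ⟨y', hy'S, hy'd⟩ := hScomp.exists_infDist_eq_dist hSne (γ s₁)
    obtain ⟨z', hz'S, hz'd⟩ := hScomp.exists_infDist_eq_dist hSne (γ s₂)
    have hy'D : dist (γ s₁) y' ≤ D := by rw [← hy'd]; exact hDle s₁ ⟨hs₁a, hs₁b⟩
    have hz'D : dist (γ s₂) z' ≤ D := by rw [← hz'd]; exact hDle s₂ ⟨hs₂a, hs₂b⟩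
    obtain ⟨G2, hG2⟩ := hgeo (γ s₂) y'
    obtain ⟨G1, hG1⟩ := hgeo y' (γ s₁)
    obtain ⟨Gz, hGz⟩ := hgeo z' (γ s₂)
    obtain ⟨Ssub, hSsubS, hSsub⟩ := segment_between hlam hS hy'S hz'S
    have slim1 := hslim (γ s₁) (γ s₂) y' (γ '' Set.Icc s₁ s₂) G2 G1
      (hrestr s₁ s₂ hs₁0 (hs₁t.trans hts₂) hlen)
      (geod_to_quasi hlam hG2) (geod_to_quasi hlam hG1)
    obtain ⟨w₁, hw₁, hxw₁⟩ := slim1.1 (γ t) ⟨t, ⟨hs₁t, hts₂⟩, rfl⟩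
    rcases hw₁ with hw₁ | hw₁
    · -- w₁ ∈ G2 : apply the second triangle
      have slim2 := hslim (γ s₂) y' z' G2 Ssub Gz (geod_to_quasi hlam hG2) hSsub
        (geod_to_quasi hlam hGz)
      obtain ⟨w₂, hw₂, hw₁₂⟩ := slim2.1 w₁ hw₁
      have hxw₂ : dist (γ t) w₂ ≤ 2*M :=
        (dist_triangle (γ t) w₁ w₂).trans (by linarith)
      rcases hw₂ with hw₂ | hw₂
      · -- w₂ ∈ Ssub ⊆ S
        exact le_max_of_le_left ((infDist_le_dist_of_mem (hSsubS hw₂)).trans hxw₂)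
      · -- w₂ ∈ Gz : geodesic from z' to γ s₂
        have hE := geod_point_add hGz hw₂
        have tineq : dist (γ t) (γ s₂) ≤ dist (γ t) w₂ + dist w₂ (γ s₂) :=
          dist_triangle _ _ _
        have hxz' : dist (γ t) z' ≤ dist (γ t) w₂ + dist w₂ z' := dist_triangle _ _ _
        have hcz : dist w₂ z' = dist z' w₂ := dist_comm _ _
        have hcz2 : dist z' (γ s₂) = dist (γ s₂) z' := dist_comm _ _
        have hbase : infDist (γ t) S ≤ dist (γ t) z' := infDist_le_dist_of_mem hz'S
        rcases le_total b (t + k/2) with hcase | hcase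
        · -- truncated at b
          have hs₂eq : s₂ = b := min_eq_left hcase
          have hzb : dist (γ s₂) z' = 0 := by
            rw [← hz'd, hs₂eq, infDist_zero_of_mem hγbS]
          have hn1 : 0 ≤ dist z' w₂ := dist_nonneg
          have hn2 : 0 ≤ dist w₂ (γ s₂) := dist_nonneg
          exact le_max_of_le_left (by linarith)
        · -- not truncated : s₂ = t + k/2
          have hs₂eq : s₂ = t + k/2 := min_eq_right hcase
          have habs : |t - s₂| = k/2 := by
            rw [hs₂eq, show t - (t + k/2) = -(k/2) by ring, abs_neg,
              abs_of_nonneg (by linarith)]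
          have hlow := (hγ ε₀ hε₀ t (Set.mem_Ici.mpr ht0) s₂ (Set.mem_Ici.mpr hs₂0)
            (by rw [habs]; linarith)).1
          rw [habs] at hlow
          exact le_max_of_le_right (by linarith)
    · -- w₁ ∈ G1 : geodesic from y' to γ s₁
      have hE := geod_point_add hG1 hw₁
      have tineq : dist (γ t) (γ s₁) ≤ dist (γ t) w₁ + dist w₁ (γ s₁) := dist_triangle _ _ _
      have hxy' : dist (γ t) y' ≤ dist (γ t) w₁ + dist w₁ y' := dist_triangle _ _ _
      have hcy : dist w₁ y' = dist y' w₁ := dist_comm _ _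
      have hcy2 : dist y' (γ s₁) = dist (γ s₁) y' := dist_comm _ _
      have hbase : infDist (γ t) S ≤ dist (γ t) y' := infDist_le_dist_of_mem hy'S
      rcases le_total (t - k/2) a with hcase | hcase
      · -- truncated at a
        have hs₁eq : s₁ = a := max_eq_left hcase
        have hza : dist (γ s₁) y' = 0 := by
          rw [← hy'd, hs₁eq, infDist_zero_of_mem hγaS]
        have hn1 : 0 ≤ dist y' w₁ := dist_nonneg
        have hn2 : 0 ≤ dist w₁ (γ s₁) := dist_nonneg
        exact le_max_of_le_left (by linarith)
      · -- not truncated : s₁ = t - k/2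
        have hs₁eq : s₁ = t - k/2 := max_eq_right hcase
        have habs : |t - s₁| = k/2 := by
          rw [hs₁eq, show t - (t - k/2) = k/2 by ring, abs_of_nonneg (by linarith)]
        have hlow := (hγ ε₀ hε₀ t (Set.mem_Ici.mpr ht0) s₁ (Set.mem_Ici.mpr hs₁0)
          (by rw [habs]; linarith)).1
        rw [habs] at hlow
        exact le_max_of_le_right (by linarith)
  have hDne : ((fun t => infDist (γ t) S) '' Set.Icc a b).Nonempty :=
    ⟨_, ⟨a, ⟨le_refl a, hab'⟩, rfl⟩⟩
  have hDmax : D ≤ max (2*M) (D - ε₀) :=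
    csSup_le hDne (by rintro v ⟨t, ht, rfl⟩; exact key t ht)
  have hD2M : D ≤ 2*M := by
    rcases le_total (D - ε₀) (2*M) with h | h
    · rw [max_eq_left h] at hDmax; exact hDmax
    · rw [max_eq_right h] at hDmax; linarith
  rintro p ⟨t, ht, rfl⟩
  obtain ⟨q, hqS, hqd⟩ := hScomp.exists_infDist_eq_dist hSne (γ t)
  refine ⟨q, hqS, ?_⟩
  rw [← hqd]
  calc infDist (γ t) S ≤ D := hDle t ht
  _ ≤ 2*M := hD2M
  _ = 2 * M := by ring
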